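/- arXiv:1709.08435 — 3 statements merged into one kernel-verified Lean document; each statement's English description precedes it below -/
import Mathlib

section
/- For every real φ with sin φ ≠ 0 and every real x with |x| < 1, one has 1 / (1 + 2x·cos φ + x²) = ∑_{n=0}^{∞} (−1)^n · (sin((n+1)φ) / sin φ) · x^n, the series on the right being convergent. -/
open Real

lemma sin_mul_abs_le (x : ℝ) : ∀ n : ℕ, |Real.sin (n * x)| ≤ n * |Real.sin x| := by
  intro n
  induction n with
  | zero => simp
  | succ n ih =>
    have : ((n : ℝ) + 1) * x = n * x + x := by ring
    push_cast
    rw [this, Real.sin_add]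
    calc |Real.sin (n*x) * Real.cos x + Real.cos (n*x) * Real.sin x|
        ≤ |Real.sin (n*x) * Real.cos x| + |Real.cos (n*x) * Real.sin x| := abs_add_le _ _
      _ ≤ |Real.sin (n*x)| * 1 + 1 * |Real.sin x| := by
          rw [abs_mul, abs_mul]
          gcongr <;> [exact Real.abs_cos_le_one x; exact Real.abs_cos_le_one _]
      _ ≤ (n : ℝ) * |Real.sin x| * 1 + 1 * |Real.sin x| := by gcongr
      _ = ((n : ℝ) + 1) * |Real.sin x| := by ring

theorem geometric_expansion (φ : ℝ) (h : Real.sin φ ≠ 0) (x : ℝ) (hx : |x| < 1) :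
    Summable (fun n : ℕ => (-1) ^ n * (Real.sin ((n + 1) * φ) / Real.sin φ) * x ^ n) ∧
    1 / (1 + 2 * x * Real.cos φ + x ^ 2) =
      ∑' n : ℕ, (-1) ^ n * (Real.sin ((n + 1) * φ) / Real.sin φ) * x ^ n := by
  set c : ℕ → ℝ := fun n => (-1) ^ n * (Real.sin ((n + 1) * φ) / Real.sin φ) with hc
  set f : ℕ → ℝ := fun n => c n * x ^ n with hf
  -- summability
  have hcb : ∀ n : ℕ, |c n| ≤ (n : ℝ) + 1 := by
    intro n
    have h1 : |Real.sin (((n : ℝ) + 1) * φ)| ≤ ((n : ℝ) + 1) * |Real.sin φ| := by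
      have := sin_mul_abs_le φ (n + 1)
      push_cast at this
      exact this
    have hs : 0 < |Real.sin φ| := abs_pos.mpr h
    rw [hc]
    simp only [abs_mul, abs_pow, abs_neg, abs_one, one_pow, one_mul, abs_div]
    rw [div_le_iff₀ hs]
    exact h1
  have hfb : ∀ n : ℕ, |f n| ≤ ((n : ℝ) + 1) * |x| ^ n := by
    intro n
    rw [hf]
    simp only [abs_mul, abs_pow]
    exact mul_le_mul_of_nonneg_right (hcb n) (by positivity)
  have hsum0 : Summable (fun n : ℕ => ((n : ℝ) + 1) * |x| ^ n) := by
    have h1 : Summable (fun n : ℕ => (n : ℝ) * |x| ^ n) := by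
      simpa using summable_pow_mul_geometric_of_norm_lt_one 1 (by simpa using hx)
    have h2 : Summable (fun n : ℕ => |x| ^ n) := summable_geometric_of_lt_one (abs_nonneg x) hx
    simpa [add_mul] using h1.add h2
  have hsum : Summable f :=
    Summable.of_abs (hsum0.of_nonneg_of_le (fun n => abs_nonneg _) hfb)
  refine ⟨hsum, ?_⟩
  -- recurrence
  have hrec : ∀ n : ℕ, c (n + 2) + 2 * Real.cos φ * c (n + 1) + c n = 0 := by
    intro n
    rw [hc]
    simp only []
    push_cast
    have e1 : ((n : ℝ) + 2 + 1) * φ = ((n : ℝ) + 1 + 1) * φ + φ := by ring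
    have e2 : ((n : ℝ) + 1) * φ = ((n : ℝ) + 1 + 1) * φ - φ := by ring
    rw [e1, e2, Real.sin_add, Real.sin_sub]
    field_simp
    ring
  have hc0 : c 0 = 1 := by rw [hc]; simp [div_self h]
  have hc1 : c 1 = -(2 * Real.cos φ) := by
    rw [hc]
    have : ((1 : ℕ) + 1 : ℝ) * φ = φ + φ := by norm_num; ring
    push_cast
    rw [show ((1 : ℝ) + 1) * φ = φ + φ by ring, Real.sin_add]
    field_simp
    ring
  -- denominator nonzero
  have hden : 1 + 2 * x * Real.cos φ + x ^ 2 ≠ 0 := by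
    have h1 := Real.sin_sq_add_cos_sq φ
    have h2 : Real.sin φ ^ 2 > 0 := by positivity
    nlinarith [sq_nonneg (x + Real.cos φ)]
  -- shifted sums
  set T := ∑' n, f n with hT
  have hsum1 : Summable (fun n : ℕ => f (n + 1)) := (summable_nat_add_iff 1).mpr hsum
  have hsum2 : Summable (fun n : ℕ => f (n + 2)) := (summable_nat_add_iff 2).mpr hsum
  have hT1 : ∑' n, f (n + 1) = T - f 0 := by
    have := Summable.tsum_eq_zero_add hsum
    rw [hT]; linarith [this]
  have hT2 : ∑' n, f (n + 2) = T - f 0 - f 1 := by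
    have := Summable.tsum_eq_zero_add hsum1
    rw [hT1] at this
    simp only [show ∀ n : ℕ, n + 1 + 1 = n + 2 from fun n => rfl] at this
    rw [zero_add] at this
    linarith [this]
  -- the zero series
  have key : ∑' n : ℕ, (f (n + 2) + 2 * Real.cos φ * x * f (n + 1) + x ^ 2 * f n) = 0 := by
    have : ∀ n : ℕ, f (n + 2) + 2 * Real.cos φ * x * f (n + 1) + x ^ 2 * f n = 0 := by
      intro n
      have hr := hrec n
      rw [hf]
      simp only []
      have : x ^ (n + 2) = x ^ n * x ^ 2 := by ring
      calc c (n+2) * x ^ (n+2) + 2 * Real.cos φ * x * (c (n+1) * x ^ (n+1)) + x ^ 2 * (c n * x ^ n)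
          = (c (n + 2) + 2 * Real.cos φ * c (n + 1) + c n) * x ^ (n + 2) := by ring
        _ = 0 := by rw [hr]; ring
    simp [this]
  have split : ∑' n : ℕ, (f (n + 2) + 2 * Real.cos φ * x * f (n + 1) + x ^ 2 * f n)
      = (T - f 0 - f 1) + 2 * Real.cos φ * x * (T - f 0) + x ^ 2 * T := by
    rw [Summable.tsum_add (hsum2.add ((hsum1.mul_left _))) (hsum.mul_left _),
        Summable.tsum_add hsum2 (hsum1.mul_left _), tsum_mul_left, tsum_mul_left, hT1, hT2]
  have hf0 : f 0 = 1 := by rw [hf]; simp [hc0]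
  have hf1 : f 1 = -(2 * Real.cos φ) * x := by simp [hf, hc1]
  have hTeq : (1 + 2 * x * Real.cos φ + x ^ 2) * T = 1 := by
    rw [split, hf0, hf1] at key
    nlinarith [key]
  rw [div_eq_iff hden]
  linear_combination -hTeq
end

section
/- For every natural number n ≥ 0, the improper integral ∫₀¹ x^n · ln(ln(1/x)) dx converges and equals −(γ + ln(n+1)) / (n+1), where γ is the Euler–Mascheroni constant. -/
open Real MeasureTheory

section AuxEulerLogInt
open Set Filter Asymptotics

private lemma aux_integrable_one :
    IntegrableOn (fun t : ℝ => Real.log t * Real.exp (-t)) (Ioi 0) volume := by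
  have H := mellin_hasDerivAt_of_isBigO_rpow (E := ℂ) (a := 2) (b := 0)
    (f := fun x : ℝ => (Real.exp (-x) : ℂ)) (s := 1) ?_ ?_ (by norm_num) ?_ (by norm_num)
  · have h1 := H.1
    rw [MellinConvergent] at h1
    simp only [sub_self, Complex.cpow_zero, one_smul] at h1
    have h2 := h1.re
    refine (integrableOn_congr_fun (fun t ht => ?_) measurableSet_Ioi).mp h2
    simp [RCLike.re_to_complex, Complex.real_smul, ← Complex.ofReal_mul, ← Complex.ofReal_neg, Complex.exp_ofReal_re]
  · refine (Continuous.continuousOn ?_).locallyIntegrableOn measurableSet_Ioi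
    exact Complex.continuous_ofReal.comp (Real.continuous_exp.comp continuous_neg)
  · rw [← isBigO_norm_left]
    simp_rw [Complex.norm_real, isBigO_norm_left]
    simpa only [neg_one_mul] using (isLittleO_exp_neg_mul_rpow_atTop zero_lt_one _).isBigO
  · simp_rw [neg_zero, Real.rpow_zero]
    refine isBigO_const_of_tendsto (?_ : Tendsto _ _ (nhds (1 : ℂ))) one_ne_zero
    rw [(by simp : (1 : ℂ) = Real.exp (-0))]
    exact (Complex.continuous_ofReal.comp
      (Real.continuous_exp.comp continuous_neg)).continuousWithinAt

private lemma aux_value_one :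
    ∫ t : ℝ in Ioi 0, Real.log t * Real.exp (-t) = -Real.eulerMascheroniConstant := by
  have hD := Complex.hasDerivAt_GammaIntegral (s := 1) (by norm_num)
  have hev : Complex.Gamma =ᶠ[nhds (1 : ℂ)] Complex.GammaIntegral := by
    have hopen : IsOpen {s : ℂ | 0 < s.re} := isOpen_lt continuous_const Complex.continuous_re
    have hmem : {s : ℂ | 0 < s.re} ∈ nhds (1 : ℂ) :=
      hopen.mem_nhds (by simp : (0:ℝ) < (1:ℂ).re)
    exact eventually_of_mem hmem fun s hs => Complex.Gamma_eq_integral hs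
  have hD' : HasDerivAt Complex.Gamma
      (∫ t : ℝ in Ioi 0, (t : ℂ) ^ ((1:ℂ) - 1) * (Real.log t * Real.exp (-t))) 1 :=
    hD.congr_of_eventuallyEq hev
  have huniq := hD'.unique Complex.hasDerivAt_Gamma_one
  have : (∫ t : ℝ in Ioi 0, (t : ℂ) ^ ((1:ℂ) - 1) * (Real.log t * Real.exp (-t)))
      = ((∫ t : ℝ in Ioi 0, Real.log t * Real.exp (-t) : ℝ) : ℂ) := by
    rw [show (∫ t : ℝ in Ioi 0, (t : ℂ) ^ ((1:ℂ) - 1) * (Real.log t * Real.exp (-t)))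
        = ∫ t : ℝ in Ioi 0, ((Real.log t * Real.exp (-t) : ℝ) : ℂ) from
      setIntegral_congr_fun measurableSet_Ioi fun t ht => by
        push_cast; rw [sub_self, Complex.cpow_zero, one_mul]]
    exact integral_ofReal
  rw [this] at huniq
  exact_mod_cast huniq

private lemma aux_exp_int {c : ℝ} (hc : 0 < c) :
    IntegrableOn (fun t : ℝ => Real.exp (-(c * t))) (Ioi 0) volume := by
  simpa only [neg_mul] using exp_neg_integrableOn_Ioi 0 hc

private lemma aux_integrable {c : ℝ} (hc : 0 < c) :
    IntegrableOn (fun t : ℝ => Real.exp (-(c * t)) * Real.log t) (Ioi 0) volume := by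
  have h1 : IntegrableOn (fun t : ℝ => Real.log (c * t) * Real.exp (-(c * t)))
      (Ioi 0) volume := by
    have := (integrableOn_Ioi_comp_mul_left_iff
      (fun u : ℝ => Real.log u * Real.exp (-u)) 0 hc).mpr
    simpa using this (by simpa using aux_integrable_one)
  have h2 := (aux_exp_int hc).const_mul (Real.log c)
  refine (integrableOn_congr_fun (fun t ht => ?_) measurableSet_Ioi).mp (h1.sub h2)
  have ht' : (0:ℝ) < t := ht
  simp only [Pi.sub_apply]
  rw [Real.log_mul hc.ne' ht'.ne']
  ring

private lemma aux_value {c : ℝ} (hc : 0 < c) :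
    ∫ t : ℝ in Ioi 0, Real.exp (-(c * t)) * Real.log t
      = -(Real.eulerMascheroniConstant + Real.log c) / c := by
  have key := integral_comp_mul_left_Ioi
    (fun u : ℝ => Real.exp (-u) * Real.log (u / c)) 0 hc
  have hL : (∫ x : ℝ in Ioi 0, Real.exp (-(c * x)) * Real.log (c * x / c))
      = ∫ t : ℝ in Ioi 0, Real.exp (-(c * t)) * Real.log t := by
    refine setIntegral_congr_fun measurableSet_Ioi fun t ht => ?_
    rw [mul_div_cancel_left₀ _ hc.ne']
  rw [mul_zero] at key
  have hR : (∫ u : ℝ in Ioi 0, Real.exp (-u) * Real.log (u / c))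
      = -Real.eulerMascheroniConstant - Real.log c := by
    have hcg : (∫ u : ℝ in Ioi 0, Real.exp (-u) * Real.log (u / c))
        = ∫ u : ℝ in Ioi 0,
            (Real.log u * Real.exp (-u) - Real.log c * Real.exp (-u)) := by
      refine setIntegral_congr_fun measurableSet_Ioi fun u hu => ?_
      have hu' : (0:ℝ) < u := hu
      rw [Real.log_div hu'.ne' hc.ne']
      ring
    have hexp : IntegrableOn (fun u : ℝ => Real.log c * Real.exp (-u)) (Ioi 0) volume := by
      simpa only [one_mul, IntegrableOn] using (aux_exp_int one_pos).const_mul (Real.log c)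
    rw [hcg, integral_sub aux_integrable_one hexp, aux_value_one,
      integral_const_mul, integral_exp_neg_Ioi_zero, mul_one]
  rw [hL] at key
  rw [key, hR]
  rw [smul_eq_mul]
  field_simp
  ring

theorem integral_pow_log_log (n : ℕ) :
    IntervalIntegrable (fun x : ℝ => x ^ n * Real.log (Real.log (1 / x))) volume 0 1 ∧
    ∫ x in (0:ℝ)..1, x ^ n * Real.log (Real.log (1 / x)) =
      -(Real.eulerMascheroniConstant + Real.log (n + 1)) / (n + 1) := by
  set c : ℝ := (n : ℝ) + 1 with hc_def
  have hc : 0 < c := by positivity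
  set g : ℝ → ℝ := fun x => x ^ n * Real.log (Real.log (1 / x)) with hg
  set f : ℝ → ℝ := fun t => Real.exp (-t) with hf
  have hderiv : ∀ x ∈ Ioi (0:ℝ), HasDerivWithinAt f (-Real.exp (-x)) (Ioi 0) x := by
    intro x _
    have := (Real.hasDerivAt_exp (-x)).comp x (hasDerivAt_neg x)
    exact (by simpa [mul_comm] using this.hasDerivWithinAt :
      HasDerivWithinAt (Real.exp ∘ Neg.neg) (-Real.exp (-x)) (Ioi 0) x)
  have hinj : InjOn f (Ioi 0) :=
    (Real.exp_injective.injOn.comp neg_injective.injOn ((Ioi 0).mapsTo_univ _))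
  have himg : f '' Ioi 0 = Ioo 0 1 := by
    ext x
    constructor
    · rintro ⟨t, ht, rfl⟩
      exact ⟨Real.exp_pos _, Real.exp_lt_one_iff.mpr (neg_neg_iff_pos.mpr ht)⟩
    · rintro ⟨hx0, hx1⟩
      refine ⟨-Real.log x, ?_, by simp [f, Real.exp_log hx0]⟩
      simpa using Real.log_neg hx0 hx1
  have hkey : ∀ t ∈ Ioi (0:ℝ),
      |(-Real.exp (-t))| • g (f t) = Real.exp (-(c * t)) * Real.log t := by
    intro t _
    rw [abs_neg, abs_of_pos (Real.exp_pos _), smul_eq_mul]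
    have h1 : (1:ℝ) / f t = Real.exp t := by
      simp [hf, Real.exp_neg]
    rw [hg]
    simp only [h1, Real.log_exp]
    rw [hf]
    rw [← Real.exp_nat_mul, ← mul_assoc, ← Real.exp_add]
    congr 2
    push_cast [hc_def]
    ring
  have hint : IntegrableOn g (Ioo 0 1) volume := by
    rw [← himg, integrableOn_image_iff_integrableOn_abs_deriv_smul
      measurableSet_Ioi hderiv hinj g]
    exact (integrableOn_congr_fun hkey measurableSet_Ioi).mpr (aux_integrable hc)
  constructor
  · exact (intervalIntegrable_iff_integrableOn_Ioo_of_le zero_le_one).mpr hint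
  · rw [intervalIntegral.integral_of_le zero_le_one, integral_Ioc_eq_integral_Ioo, ← himg,
      integral_image_eq_integral_abs_deriv_smul measurableSet_Ioi hderiv hinj g,
      setIntegral_congr_fun measurableSet_Ioi hkey, aux_value hc]

end AuxEulerLogInt
end

section
/- For every real s > 0, the improper integral ∫₀^∞ e^{−s·u} · ln u du converges and equals −(γ + ln s) / s, where γ is the Euler–Mascheroni constant. -/
open Real MeasureTheory Set Filter

lemma mellin_key :
    MellinConvergent (fun t : ℝ => Real.log t • ((Real.exp (-t) : ℝ) : ℂ)) 1 ∧
      HasDerivAt (mellin fun x : ℝ => ((Real.exp (-x) : ℝ) : ℂ))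
        (mellin (fun t : ℝ => Real.log t • ((Real.exp (-t) : ℝ) : ℂ)) 1) 1 := by
  refine mellin_hasDerivAt_of_isBigO_rpow (a := 2) (b := 0) ?_ ?_ (by norm_num) ?_ (by norm_num)
  · refine (Continuous.continuousOn ?_).locallyIntegrableOn measurableSet_Ioi
    exact Complex.continuous_ofReal.comp (Real.continuous_exp.comp continuous_neg)
  · rw [← Asymptotics.isBigO_norm_left]
    simp_rw [Complex.norm_real,
      Asymptotics.isBigO_norm_left]
    simpa only [neg_one_mul] using (isLittleO_exp_neg_mul_rpow_atTop zero_lt_one _).isBigO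
  · simp_rw [neg_zero, rpow_zero]
    refine Asymptotics.isBigO_const_of_tendsto (?_ : Tendsto _ _ (nhds (1 : ℂ))) one_ne_zero
    rw [(by simp : (1 : ℂ) = Real.exp (-0))]
    exact (Complex.continuous_ofReal.comp
      (Real.continuous_exp.comp continuous_neg)).continuousWithinAt

lemma key1 : IntegrableOn (fun t : ℝ => Real.exp (-t) * Real.log t) (Set.Ioi 0) volume ∧
    ∫ t in Set.Ioi (0:ℝ), Real.exp (-t) * Real.log t = -Real.eulerMascheroniConstant := by
  obtain ⟨hconv, hderiv⟩ := mellin_key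
  have heq : (fun t : ℝ => (t : ℂ) ^ ((1:ℂ) - 1) • (Real.log t • ((Real.exp (-t) : ℝ) : ℂ)))
      = fun t : ℝ => ((Real.log t * Real.exp (-t) : ℝ) : ℂ) := by
    ext t
    simp [Complex.cpow_zero, Complex.real_smul, Complex.ofReal_mul]
  have hint : IntegrableOn (fun t : ℝ => Real.log t * Real.exp (-t)) (Set.Ioi 0) volume := by
    have := hconv
    unfold MellinConvergent at this
    rw [heq] at this
    simpa only [IntegrableOn, RCLike.re_to_complex, Complex.ofReal_re] using this.re
  constructor
  · exact hint.congr_fun (fun t _ => mul_comm _ _) measurableSet_Ioi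
  have hD : mellin (fun t : ℝ => Real.log t • ((Real.exp (-t) : ℝ) : ℂ)) 1
      = ((∫ t in Set.Ioi (0:ℝ), Real.log t * Real.exp (-t) : ℝ) : ℂ) := by
    unfold mellin
    rw [heq]; exact integral_ofReal
  rw [hD] at hderiv
  rw [show (mellin fun x : ℝ => ((Real.exp (-x) : ℝ) : ℂ)) = Complex.GammaIntegral from
    Complex.GammaIntegral_eq_mellin.symm] at hderiv
  have h2 := hderiv.real_of_complex
  have hev : (fun x : ℝ => (Complex.GammaIntegral x).re) =ᶠ[nhds 1] Real.Gamma := by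
    filter_upwards [eventually_gt_nhds (by norm_num : (0:ℝ) < 1)] with x hx
    rw [← Complex.Gamma_eq_integral (by simpa using hx), Complex.Gamma_ofReal,
      Complex.ofReal_re]
  have h3 : HasDerivAt Real.Gamma ((((∫ t in Set.Ioi (0:ℝ),
      Real.log t * Real.exp (-t) : ℝ) : ℂ)).re) 1 := h2.congr_of_eventuallyEq hev.symm
  have h4 := h3.unique Real.hasDerivAt_Gamma_one
  rw [Complex.ofReal_re] at h4
  rw [show (fun t : ℝ => Real.exp (-t) * Real.log t) = fun t : ℝ => Real.log t * Real.exp (-t)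
    from funext fun t => mul_comm _ _]
  exact h4

theorem integral_exp_mul_log (s : ℝ) (hs : 0 < s) :
    IntegrableOn (fun u : ℝ => Real.exp (-s * u) * Real.log u) (Set.Ioi 0) volume ∧
    ∫ u in Set.Ioi (0:ℝ), Real.exp (-s * u) * Real.log u =
      -(Real.eulerMascheroniConstant + Real.log s) / s := by
  have hne : s ≠ 0 := hs.ne'
  set f : ℝ → ℝ := fun x => Real.exp (-x) * Real.log (x / s) with hf
  have hcomp : (fun u : ℝ => Real.exp (-s * u) * Real.log u) = fun u => f (s * u) := by
    funext u
    rw [hf]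
    simp [mul_div_cancel_left₀ u hne, neg_mul]
  have hexp : IntegrableOn (fun x : ℝ => Real.exp (-x)) (Set.Ioi 0) volume := by
    simpa using exp_neg_integrableOn_Ioi 0 one_pos
  have heqon : EqOn (fun x : ℝ => Real.exp (-x) * Real.log x - Real.exp (-x) * Real.log s) f
      (Set.Ioi 0) := by
    intro x hx
    rw [hf]
    simp only [Real.log_div (ne_of_gt hx) hne, mul_sub]
  have hfint : IntegrableOn f (Set.Ioi 0) volume :=
    IntegrableOn.congr_fun (key1.1.sub (hexp.mul_const (Real.log s))) heqon measurableSet_Ioi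
  constructor
  · rw [hcomp]
    exact (integrableOn_Ioi_comp_mul_left_iff f 0 hs).mpr (by rwa [mul_zero])
  rw [hcomp, integral_comp_mul_left_Ioi f 0 hs, mul_zero]
  have hval : ∫ x in Set.Ioi (0:ℝ), f x = -Real.eulerMascheroniConstant - Real.log s := by
    rw [← setIntegral_congr_fun measurableSet_Ioi heqon,
      integral_sub key1.1 (hexp.mul_const (Real.log s)), key1.2, integral_mul_const,
      integral_exp_neg_Ioi_zero, one_mul]
  rw [hval, smul_eq_mul]
  field_simp
  ring
end
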